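/- Let N users each have a convex operating cost C_i and baseline cost \bar{C}_i. Consider maximizing the Nash product \prod_{i}(\bar{C}_i - C_i(x_i) - \pi_i) over feasible schedules x_i and payments \pi_i satisfying \sum_i \pi_i = 0 and \bar{C}_i - C_i(x_i) - \pi_i \ge 0. Then at any optimal solution, the schedules (x_i) minimize the total cost \sum_i C_i(x_i) over the feasible set, provided there exists a feasible point with \sum_i C_i(x_i) < \sum_i \bar{C}_i. -/

import Mathlib

/-- AM-GM: product of nonneg reals is at most the N-th power of their mean. -/
lemma prod_le_mean_pow {ι : Type*} [Fintype ι] [Nonempty ι] (z : ι → ℝ)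
    (hz : ∀ i, 0 ≤ z i) :
    ∏ i, z i ≤ ((∑ i, z i) / (Fintype.card ι : ℝ)) ^ (Fintype.card ι) := by
  have hN : (0:ℝ) < (Fintype.card ι : ℝ) := by
    exact_mod_cast Fintype.card_pos
  have h := Real.geom_mean_le_arith_mean Finset.univ (fun _ => (1:ℝ)) z
    (fun _ _ => zero_le_one) (by simpa using hN) (fun i _ => hz i)
  simp only [Real.rpow_one, one_mul, Finset.sum_const, Finset.card_univ, nsmul_eq_mul,
    mul_one] at h
  have hP : 0 ≤ ∏ i, z i := Finset.prod_nonneg fun i _ => hz i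
  have hm : 0 ≤ (∑ i, z i) / (Fintype.card ι : ℝ) :=
    div_nonneg (Finset.sum_nonneg fun i _ => hz i) hN.le
  calc ∏ i, z i = ((∏ i, z i) ^ ((Fintype.card ι : ℝ))⁻¹) ^ (Fintype.card ι : ℝ) := by
        rw [← Real.rpow_mul hP, inv_mul_cancel₀ hN.ne', Real.rpow_one]
    _ ≤ ((∑ i, z i) / (Fintype.card ι : ℝ)) ^ (Fintype.card ι : ℝ) :=
        Real.rpow_le_rpow (Real.rpow_nonneg hP _) h hN.le
    _ = _ := Real.rpow_natCast _ _

/-- At any optimum of the Nash bargaining problem (maximize the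
product of surpluses over schedules and zero-sum payments), the schedules
minimize the total operating cost, provided some feasible point yields a
strictly positive total surplus. -/
theorem nash_product_optimum_is_socially_optimal
    {ι : Type*} [Fintype ι] [Nonempty ι]
    {E : Type*} [NormedAddCommGroup E] [NormedSpace ℝ E]
    (C : ι → E → ℝ) (Cbar : ι → ℝ) (F : Set (ι → E))
    (hF : Convex ℝ F)
    (hconv : ∀ i, ConvexOn ℝ Set.univ (C i))
    (xs : ι → E) (πs : ι → ℝ)
    (hxF : xs ∈ F) (hπ : ∑ i, πs i = 0)
    (hsurplus : ∀ i, 0 ≤ Cbar i - C i (xs i) - πs i)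
    (hopt : ∀ x ∈ F, ∀ π : ι → ℝ, ∑ i, π i = 0 →
      (∀ i, 0 ≤ Cbar i - C i (x i) - π i) →
      ∏ i, (Cbar i - C i (x i) - π i) ≤ ∏ i, (Cbar i - C i (xs i) - πs i))
    (hexists : ∃ x0 ∈ F, ∑ i, C i (x0 i) < ∑ i, Cbar i) :
    ∀ x ∈ F, ∑ i, C i (xs i) ≤ ∑ i, C i (x i) := by
  intro x hx
  set N : ℝ := (Fintype.card ι : ℝ) with hNdef
  have hN : (0:ℝ) < N := by rw [hNdef]; exact_mod_cast Fintype.card_pos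
  -- Total surplus at xs is nonneg
  have htot : ∑ i, C i (xs i) ≤ ∑ i, Cbar i := by
    have := Finset.sum_nonneg (fun i (_ : i ∈ Finset.univ) => hsurplus i)
    simp only [Finset.sum_sub_distrib, hπ, sub_zero] at this
    linarith
  by_cases hcase : ∑ i, Cbar i ≤ ∑ i, C i (x i)
  · linarith
  push_neg at hcase
  -- equalized payments for x
  set s : ℝ := (∑ i, Cbar i - ∑ i, C i (x i)) / N with hs
  have hspos : 0 < s := div_pos (by linarith) hN
  set π : ι → ℝ := fun i => Cbar i - C i (x i) - s with hπdef
  have hπsum : ∑ i, π i = 0 := by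
    simp only [hπdef, Finset.sum_sub_distrib, Finset.sum_const, Finset.card_univ,
      nsmul_eq_mul, hs]
    field_simp
    rw [hNdef]; ring
  have hsurp : ∀ i, 0 ≤ Cbar i - C i (x i) - π i := by
    intro i; simp only [hπdef]; linarith
  have h1 := hopt x hx π hπsum hsurp
  have h2 : ∏ i, (Cbar i - C i (x i) - π i) = s ^ (Fintype.card ι) := by
    simp [hπdef, Finset.prod_const]
  have h3 := prod_le_mean_pow (fun i => Cbar i - C i (xs i) - πs i) hsurplus
  have hmean : (∑ i, (Cbar i - C i (xs i) - πs i)) / N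
      = (∑ i, Cbar i - ∑ i, C i (xs i)) / N := by
    simp only [Finset.sum_sub_distrib, hπ, sub_zero]
  rw [hmean] at h3
  have h4 : s ^ (Fintype.card ι) ≤ ((∑ i, Cbar i - ∑ i, C i (xs i)) / N) ^ (Fintype.card ι) := by
    calc s ^ (Fintype.card ι) = ∏ i, (Cbar i - C i (x i) - π i) := h2.symm
      _ ≤ ∏ i, (Cbar i - C i (xs i) - πs i) := h1
      _ ≤ _ := h3
  have h5 : s ≤ (∑ i, Cbar i - ∑ i, C i (xs i)) / N := by
    have hcard : Fintype.card ι ≠ 0 := Fintype.card_ne_zero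
    exact le_of_pow_le_pow_left₀ hcard (div_nonneg (by linarith) hN.le) h4
  rw [hs] at h5
  have := (div_le_div_iff_of_pos_right hN).mp h5
  linarith
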